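/- arXiv:1203.6801 — 5 statements merged into one kernel-verified Lean document; each statement's English description precedes it below -/
import Mathlib

section
/- In the *-algebra O(Σ³_q), for all m ∈ ℕ: (ζ₀*)^m ζ₀^m = ∏_{p=1}^{m} (1 − q^{−2p} ζ₁² ξ). -/
/-- In `O(Σ³_q)`: `(ζ₀*)^m ζ₀^m = ∏_{p=1}^{m} (1 − q^{−2p} ζ₁² ξ)`. -/
theorem zeta_power_relation_right {A : Type*} [Ring A] [Algebra ℝ A] [StarRing A]
    (q : ℝ) (hq : q ∈ Set.Ioo (0 : ℝ) 1)
    (ζ₀ ζ₁ : A) (ξ : Aˣ)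
    (hcentral : ∀ x : A, (ξ : A) * x = x * (ξ : A))
    (hunitary : star (ξ : A) = ((ξ⁻¹ : Aˣ) : A))
    (hrel1 : ζ₀ * ζ₁ = q • (ζ₁ * ζ₀))
    (hrel2 : ζ₀ * star ζ₀ = star ζ₀ * ζ₀ + (q ^ (-2 : ℤ) - 1) • (ζ₁ ^ 2 * (ξ : A)))
    (hrel3 : ζ₀ * star ζ₀ + ζ₁ ^ 2 * (ξ : A) = 1)
    (hrel4 : star ζ₁ = ζ₁ * (ξ : A))
    (m : ℕ) :
    (star ζ₀) ^ m * ζ₀ ^ m =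
      ((List.range m).map
        (fun p => (1 : A) - q ^ (-(2 * ((p : ℤ) + 1))) • (ζ₁ ^ 2 * (ξ : A)))).prod := by
  have hq0 : q ≠ 0 := ne_of_gt hq.1
  set c : A := ζ₁ ^ 2 * (ξ : A) with hc
  -- ζ₁ ζ₀ = q⁻¹ • (ζ₀ ζ₁)
  have h10 : ζ₁ * ζ₀ = q⁻¹ • (ζ₀ * ζ₁) := by
    rw [hrel1, smul_smul, inv_mul_cancel₀ hq0, one_smul]
  -- c ζ₀ = q⁻² • (ζ₀ c)
  have hcomm : c * ζ₀ = (q ^ (-2 : ℤ)) • (ζ₀ * c) := by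
    have h2 : ζ₁ ^ 2 * ζ₀ = (q⁻¹ * q⁻¹) • (ζ₀ * ζ₁ ^ 2) := by
      calc ζ₁ ^ 2 * ζ₀ = ζ₁ * (ζ₁ * ζ₀) := by rw [sq, mul_assoc]
        _ = ζ₁ * (q⁻¹ • (ζ₀ * ζ₁)) := by rw [h10]
        _ = q⁻¹ • ((ζ₁ * ζ₀) * ζ₁) := by rw [mul_smul_comm, mul_assoc]
        _ = q⁻¹ • ((q⁻¹ • (ζ₀ * ζ₁)) * ζ₁) := by rw [h10]
        _ = (q⁻¹ * q⁻¹) • (ζ₀ * ζ₁ ^ 2) := by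
            rw [smul_mul_assoc, smul_smul, sq, mul_assoc]
    have hz : (q : ℝ) ^ (-2 : ℤ) = q⁻¹ * q⁻¹ := by
      rw [show (-2 : ℤ) = -1 + -1 by norm_num, zpow_add₀ hq0, zpow_neg_one]
    calc c * ζ₀ = ζ₁ ^ 2 * ((ξ : A) * ζ₀) := by rw [hc, mul_assoc]
      _ = (ζ₁ ^ 2 * ζ₀) * (ξ : A) := by rw [hcentral, mul_assoc]
      _ = ((q⁻¹ * q⁻¹) • (ζ₀ * ζ₁ ^ 2)) * (ξ : A) := by rw [h2]
      _ = (q ^ (-2 : ℤ)) • (ζ₀ * c) := by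
          rw [hz, smul_mul_assoc, hc, mul_assoc]
  -- c ζ₀^m = q⁻²ᵐ • (ζ₀^m c)
  have hcommpow : ∀ n : ℕ, c * ζ₀ ^ n = (q ^ (-2 * (n : ℤ))) • (ζ₀ ^ n * c) := by
    intro n
    induction n with
    | zero => simp
    | succ n ih =>
        calc c * ζ₀ ^ (n + 1) = (c * ζ₀ ^ n) * ζ₀ := by rw [pow_succ, ← mul_assoc]
          _ = (q ^ (-2 * (n : ℤ))) • (ζ₀ ^ n * (c * ζ₀)) := by
              rw [ih, smul_mul_assoc, mul_assoc]
          _ = (q ^ (-2 * (n : ℤ))) • (ζ₀ ^ n * ((q ^ (-2 : ℤ)) • (ζ₀ * c))) := by rw [hcomm]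
          _ = (q ^ (-2 * (n : ℤ)) * q ^ (-2 : ℤ)) • (ζ₀ ^ (n + 1) * c) := by
              rw [mul_smul_comm, smul_smul, pow_succ, mul_assoc]
          _ = (q ^ (-2 * ((n : ℤ) + 1))) • (ζ₀ ^ (n + 1) * c) := by
              rw [← zpow_add₀ hq0]; ring_nf
  -- base relation
  have hbase : star ζ₀ * ζ₀ = 1 - (q ^ (-2 : ℤ)) • c := by
    have h3 : ζ₀ * star ζ₀ = 1 - c := by rw [eq_sub_iff_add_eq, hc]; exact hrel3
    have := hrel2
    rw [h3, sub_smul, one_smul] at this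
    have h4 : star ζ₀ * ζ₀ = (1 - c) - ((q ^ (-2 : ℤ)) • c - c) := by
      rw [this]; abel
    rw [h4]; abel
  -- main induction
  induction m with
  | zero => simp
  | succ m ih =>
      have hsplit : (star ζ₀) ^ (m + 1) * ζ₀ ^ (m + 1)
          = (star ζ₀) ^ m * ((star ζ₀ * ζ₀) * ζ₀ ^ m) := by
        rw [pow_succ, pow_succ']
        simp [mul_assoc]
      rw [hsplit, hbase]
      have hexp : star ζ₀ ^ m * ((1 - q ^ (-2 : ℤ) • c) * ζ₀ ^ m)
          = star ζ₀ ^ m * ζ₀ ^ m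
            - (q ^ (-(2 * ((m : ℤ) + 1)))) • (star ζ₀ ^ m * ζ₀ ^ m * c) := by
        rw [sub_mul, one_mul, smul_mul_assoc, hcommpow m, smul_smul, mul_sub,
          mul_smul_comm, ← mul_assoc, ← zpow_add₀ hq0]
        congr 2
        ring
      rw [hexp, ih]
      simp [List.range_succ, mul_sub, mul_smul_comm]
end

section
/- In O(Σ³_q), set a = ζ₁²ξ, b = ζ₀^l ζ₁ ξ^s, c₋ = ζ₀^{2l} ξ^{2s−1} for a natural number l ≥ 1 and integer s. Then b² = q^{3l} a c₋, b b* = q^{2l} a ∏_{m=0}^{l−1}(1 − q^{2m}a), and b*b = a ∏_{m=1}^{l}(1 − q^{−2m}a). -/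
section helpers
variable {A : Type*} [Ring A] [Algebra ℝ A]

lemma aux_comm_pow (x z : A) (t : ℝ) (h : x * z = t • (z * x)) :
    ∀ n : ℕ, x * z ^ n = t ^ n • (z ^ n * x)
  | 0 => by simp
  | n + 1 => by
      rw [pow_succ, ← mul_assoc, aux_comm_pow x z t h n, smul_mul_assoc, mul_assoc, h,
        mul_smul_comm, smul_smul, ← mul_assoc, ← pow_succ, ← pow_succ]

lemma aux_flip (x y : A) (t : ℝ) (ht : t ≠ 0) (h : x * y = t • (y * x)) :
    y * x = t⁻¹ • (x * y) := by
  rw [h, smul_smul, inv_mul_cancel₀ ht, one_smul]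

lemma aux_step (a z : A) (t c : ℝ) (hza : z * a = t • (a * z)) :
    z * ((1:A) - c • a) = ((1:A) - (t * c) • a) * z := by
  have h1 : z * (c • a) = (t * c) • (a * z) := by
    rw [mul_smul_comm, hza, smul_smul, mul_comm c t]
  rw [mul_sub, sub_mul, mul_one, one_mul, h1, smul_mul_assoc]

lemma aux_a_factor (a : A) (c : ℝ) : a * ((1:A) - c • a) = ((1:A) - c • a) * a := by
  rw [mul_sub, sub_mul, mul_one, one_mul, mul_smul_comm, smul_mul_assoc]

lemma aux_a_prod (a : A) (f : ℕ → ℝ) :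
    ∀ l : ℕ, a * ((List.range l).map (fun m => (1:A) - f m • a)).prod
      = ((List.range l).map (fun m => (1:A) - f m • a)).prod * a
  | 0 => by simp
  | l + 1 => by
      simp only [List.range_succ, List.map_append, List.prod_append, List.map_cons,
        List.map_nil, List.prod_cons, List.prod_nil, mul_one]
      rw [← mul_assoc, aux_a_prod a f l, mul_assoc, aux_a_factor, ← mul_assoc]

lemma aux_factor_prod (a : A) (c : ℝ) (f : ℕ → ℝ) (l : ℕ) :
    ((1:A) - c • a) * ((List.range l).map (fun m => (1:A) - f m • a)).prod
      = ((List.range l).map (fun m => (1:A) - f m • a)).prod * ((1:A) - c • a) := by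
  rw [sub_mul, mul_sub, one_mul, mul_one, smul_mul_assoc, aux_a_prod, ← mul_smul_comm]

lemma aux_z_prod (a z : A) (t : ℝ) (hza : z * a = t • (a * z)) (f : ℕ → ℝ) :
    ∀ l : ℕ, z * ((List.range l).map (fun m => (1:A) - f m • a)).prod
      = ((List.range l).map (fun m => (1:A) - (t * f m) • a)).prod * z
  | 0 => by simp
  | l + 1 => by
      simp only [List.range_succ, List.map_append, List.prod_append, List.map_cons,
        List.map_nil, List.prod_cons, List.prod_nil, mul_one]
      rw [← mul_assoc, aux_z_prod a z t hza f l, mul_assoc, aux_step a z t (f l) hza,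
        ← mul_assoc]

lemma aux_prod_formula (a z w : A) (t : ℝ) (f : ℕ → ℝ)
    (hza : z * a = t • (a * z)) (hzw : z * w = 1 - f 0 • a) (hf : ∀ m, t * f m = f (m+1)) :
    ∀ l : ℕ, z ^ l * w ^ l = ((List.range l).map (fun m => (1:A) - f m • a)).prod
  | 0 => by simp
  | l + 1 => by
      have IH := aux_prod_formula a z w t f hza hzw hf l
      have hfs : (fun m => (1:A) - (t * f m) • a) = fun m => (1:A) - f (m+1) • a :=
        funext fun m => by rw [hf]
      calc z ^ (l+1) * w ^ (l+1) = z * (z ^ l * w ^ l) * w := by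
            rw [pow_succ', pow_succ, mul_assoc, mul_assoc, mul_assoc]
        _ = z * ((List.range l).map (fun m => (1:A) - f m • a)).prod * w := by rw [IH]
        _ = ((List.range l).map (fun m => (1:A) - (t * f m) • a)).prod * (z * w) := by
            rw [aux_z_prod a z t hza f l, mul_assoc]
        _ = ((List.range l).map (fun m => (1:A) - f (m+1) • a)).prod * ((1:A) - f 0 • a) := by
            rw [hzw, hfs]
        _ = ((1:A) - f 0 • a) * ((List.range l).map (fun m => (1:A) - f (m+1) • a)).prod :=
            (aux_factor_prod a (f 0) (fun m => f (m+1)) l).symm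
        _ = ((List.range (l+1)).map (fun m => (1:A) - f m • a)).prod := by
            rw [List.range_succ_eq_map]
            simp [List.map_map, Function.comp_def, Nat.succ_eq_add_one]
end helpers

/-- Relations of `O(ℝP_q²(l;−))`: with `a = ζ₁²ξ`, `b = ζ₀^l ζ₁ ξ^s`,
`c₋ = ζ₀^{2l} ξ^{2s−1}` one has `b² = q^{3l} a c₋`,
`b b* = q^{2l} a ∏_{m=0}^{l−1}(1 − q^{2m}a)`, `b*b = a ∏_{m=1}^{l}(1 − q^{−2m}a)`. -/
theorem RPq_minus_relations_b {A : Type*} [Ring A] [Algebra ℝ A] [StarRing A]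
    (q : ℝ) (hq : q ∈ Set.Ioo (0 : ℝ) 1)
    (ζ₀ ζ₁ : A) (ξ : Aˣ)
    (hcentral : ∀ x : A, (ξ : A) * x = x * (ξ : A))
    (hunitary : star (ξ : A) = ((ξ⁻¹ : Aˣ) : A))
    (hrel1 : ζ₀ * ζ₁ = q • (ζ₁ * ζ₀))
    (hrel2 : ζ₀ * star ζ₀ = star ζ₀ * ζ₀ + (q ^ (-2 : ℤ) - 1) • (ζ₁ ^ 2 * (ξ : A)))
    (hrel3 : ζ₀ * star ζ₀ + ζ₁ ^ 2 * (ξ : A) = 1)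
    (hrel4 : star ζ₁ = ζ₁ * (ξ : A))
    (l : ℕ) (hl : 1 ≤ l) (s : ℤ)
    (a b c : A)
    (ha : a = ζ₁ ^ 2 * (ξ : A))
    (hb : b = ζ₀ ^ l * ζ₁ * ((ξ ^ s : Aˣ) : A))
    (hc : c = ζ₀ ^ (2 * l) * ((ξ ^ (2 * s - 1) : Aˣ) : A)) :
    b * b = q ^ (3 * l) • (a * c) ∧
    b * star b =
      q ^ (2 * l) • (a * ((List.range l).map (fun m => (1 : A) - q ^ (2 * m) • a)).prod) ∧
    star b * b =
      a * ((List.range l).map (fun m => (1 : A) - q ^ (-(2 * ((m : ℤ) + 1))) • a)).prod := by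
  obtain ⟨hq0', hq1⟩ := hq
  have hq0 : q ≠ 0 := ne_of_gt hq0'
  -- centrality of powers of ξ
  have hcz : ∀ (n : ℤ) (x : A), ((ξ ^ n : Aˣ) : A) * x = x * ((ξ ^ n : Aˣ) : A) := by
    intro n x
    have h : Commute x (ξ : A) := (hcentral x).symm
    exact (h.units_zpow_right n).eq.symm
  -- star of powers of ξ
  have hstz : ∀ n : ℤ, star ((ξ ^ n : Aˣ) : A) = ((ξ ^ (-n) : Aˣ) : A) := by
    intro n
    induction n using Int.induction_on with
    | zero => simp
    | succ k ih =>
        rw [zpow_add_one, Units.val_mul, star_mul, ih, hunitary, ← Units.val_mul]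
        congr 1
        rw [← zpow_neg_one, ← zpow_add]
        congr 1
        omega
    | pred k ih =>
        have h1 : star ((ξ⁻¹ : Aˣ) : A) = (ξ : A) := by rw [← hunitary, star_star]
        rw [zpow_sub_one, Units.val_mul, star_mul, ih, h1, ← Units.val_mul]
        congr 1
        group
  -- basic commutation with a
  have hζz : ζ₁ * ζ₀ = q⁻¹ • (ζ₀ * ζ₁) := aux_flip ζ₀ ζ₁ q hq0 hrel1
  have hz2 : ζ₀ * ζ₁ ^ 2 = (q ^ 2) • (ζ₁ ^ 2 * ζ₀) := by
    have h : ζ₀ * (ζ₁ * ζ₁) = (q * q) • ((ζ₁ * ζ₁) * ζ₀) := by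
      rw [← mul_assoc, hrel1, smul_mul_assoc, mul_assoc, hrel1, mul_smul_comm, smul_smul,
        ← mul_assoc]
    simpa [pow_two] using h
  have h2z : ζ₁ ^ 2 * ζ₀ = ((q ^ 2)⁻¹) • (ζ₀ * ζ₁ ^ 2) :=
    aux_flip ζ₀ (ζ₁ ^ 2) (q ^ 2) (pow_ne_zero 2 hq0) hz2
  -- transfer commutation from ζ₁² to a
  have key : ∀ (x : A) (t : ℝ), x * ζ₁ ^ 2 = t • (ζ₁ ^ 2 * x) → x * a = t • (a * x) := by
    intro x t h
    rw [ha, ← mul_assoc, h, smul_mul_assoc, mul_assoc, mul_assoc, hcentral x]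
  have hza : ζ₀ * a = (q ^ 2) • (a * ζ₀) := key ζ₀ (q ^ 2) hz2
  have hζa : ζ₁ * a = a * ζ₁ := by
    have h : ζ₁ * a = (1 : ℝ) • (a * ζ₁) :=
      key ζ₁ 1 (by rw [one_smul, ← pow_succ', ← pow_succ])
    rwa [one_smul] at h
  -- the two product formulas
  have ha1 : ζ₀ * star ζ₀ = 1 - a := by
    rw [ha, ← hrel3]; abel
  have ha2 : star ζ₀ * ζ₀ = 1 - ((q ^ 2)⁻¹) • a := by
    have h := hrel2
    rw [← ha, ha1] at h
    have h2 : star ζ₀ * ζ₀ = 1 - a - (q ^ (-2 : ℤ) - 1) • a := eq_sub_of_add_eq h.symm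
    have e : (q : ℝ) ^ (-2 : ℤ) = (q ^ 2)⁻¹ := by
      rw [zpow_neg, zpow_two, pow_two]
    rw [h2, e, sub_smul, one_smul]; abel
  have hwa : star ζ₀ * a = ((q ^ 2)⁻¹) • (a * star ζ₀) := by
    have h : star ζ₀ * ζ₀ * star ζ₀ = star ζ₀ * (1 - a) := by
      rw [mul_assoc, ha1]
    rw [ha2, sub_mul, mul_sub, one_mul, mul_one, smul_mul_assoc] at h
    exact (sub_right_injective h).symm
  have haw : a * star ζ₀ = (q ^ 2) • (star ζ₀ * a) := by
    have := aux_flip (star ζ₀) a ((q ^ 2)⁻¹) (by positivity) hwa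
    rwa [inv_inv] at this
  have hP := aux_prod_formula a ζ₀ (star ζ₀) (q ^ 2) (fun m => q ^ (2 * m)) hza
    (by simpa using ha1)
    (fun m => by rw [← pow_add]; congr 1; ring)
  have hQ := aux_prod_formula a (star ζ₀) ζ₀ ((q ^ 2)⁻¹)
    (fun m => q ^ (-(2 * ((m : ℤ) + 1)))) hwa
    (by
      have e : (q : ℝ) ^ (-(2 * (((0 : ℕ) : ℤ) + 1))) = (q ^ 2)⁻¹ := by
        rw [show (-(2 * (((0 : ℕ) : ℤ) + 1))) = (-2 : ℤ) by norm_num, zpow_neg, zpow_two,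
          pow_two]
      show star ζ₀ * ζ₀ = 1 - q ^ (-(2 * (((0 : ℕ) : ℤ) + 1))) • a
      rw [ha2, e])
    (fun m => by
      have e : ((q ^ 2)⁻¹ : ℝ) = q ^ (-2 : ℤ) := by rw [zpow_neg, zpow_two, pow_two]
      rw [e, ← zpow_add₀ hq0]
      congr 1
      push_cast
      ring)
  -- star of b
  have hsb : star b = ((ξ ^ (-s) : Aˣ) : A) * (ζ₁ * (ξ : A) * (star ζ₀) ^ l) := by
    rw [hb, star_mul, star_mul, hstz s, hrel4, star_pow]
  refine ⟨?_, ?_, ?_⟩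
  · -- b * b = q^(3l) • (a * c)
    have hξξ : ((ξ ^ s : Aˣ) : A) * ((ξ ^ s : Aˣ) : A) = ((ξ ^ (2 * s) : Aˣ) : A) := by
      rw [← Units.val_mul, ← zpow_add, two_mul]
    have hξ1 : ((ξ ^ (2 * s - 1) : Aˣ) : A) * (ξ : A) = ((ξ ^ (2 * s) : Aˣ) : A) := by
      rw [← Units.val_mul]
      congr 1
      group
    have lhs : b * b = (q⁻¹) ^ l • (ζ₀ ^ (2 * l) * (ζ₁ ^ 2 * ((ξ ^ (2 * s) : Aˣ) : A))) := by
      calc b * b = ζ₀ ^ l * (ζ₁ * (((ξ ^ s : Aˣ) : A) * (ζ₀ ^ l * (ζ₁ * ((ξ ^ s : Aˣ) : A))))) := by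
            rw [hb]; simp only [mul_assoc]
        _ = ζ₀ ^ l * (ζ₁ * ((ζ₀ ^ l * (ζ₁ * ((ξ ^ s : Aˣ) : A))) * ((ξ ^ s : Aˣ) : A))) := by
            rw [hcz s]
        _ = ζ₀ ^ l * ((ζ₁ * ζ₀ ^ l) * (ζ₁ * (((ξ ^ s : Aˣ) : A) * ((ξ ^ s : Aˣ) : A)))) := by
            simp only [mul_assoc]
        _ = (q⁻¹) ^ l • (ζ₀ ^ l * (ζ₀ ^ l * (ζ₁ * (ζ₁ * ((ξ ^ (2 * s) : Aˣ) : A))))) := by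
            rw [aux_comm_pow ζ₁ ζ₀ q⁻¹ hζz l, hξξ, smul_mul_assoc, mul_smul_comm]
            simp only [mul_assoc]
        _ = (q⁻¹) ^ l • (ζ₀ ^ (2 * l) * (ζ₁ ^ 2 * ((ξ ^ (2 * s) : Aˣ) : A))) := by
            rw [two_mul l, pow_add, pow_two]
            simp only [mul_assoc]
    have rhs : a * c = ((q ^ 2)⁻¹) ^ (2 * l) •
        (ζ₀ ^ (2 * l) * (ζ₁ ^ 2 * ((ξ ^ (2 * s) : Aˣ) : A))) := by
      calc a * c = ζ₁ ^ 2 * ((ξ : A) * (ζ₀ ^ (2 * l) * ((ξ ^ (2 * s - 1) : Aˣ) : A))) := by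
            rw [ha, hc]; simp only [mul_assoc]
        _ = ζ₁ ^ 2 * (ζ₀ ^ (2 * l) * (((ξ ^ (2 * s - 1) : Aˣ) : A) * (ξ : A))) := by
            rw [hcentral]; simp only [mul_assoc]
        _ = (ζ₁ ^ 2 * ζ₀ ^ (2 * l)) * ((ξ ^ (2 * s) : Aˣ) : A) := by
            rw [hξ1]; simp only [mul_assoc]
        _ = ((q ^ 2)⁻¹) ^ (2 * l) • (ζ₀ ^ (2 * l) * (ζ₁ ^ 2 * ((ξ ^ (2 * s) : Aˣ) : A))) := by
            rw [aux_comm_pow (ζ₁ ^ 2) ζ₀ ((q ^ 2)⁻¹) h2z (2 * l), smul_mul_assoc]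
            simp only [mul_assoc]
    have hscal : q ^ (3 * l) * ((q ^ 2)⁻¹) ^ (2 * l) = (q⁻¹) ^ l := by
      rw [inv_pow, inv_pow, ← pow_mul, show 2 * (2 * l) = 3 * l + l by ring, pow_add,
        mul_inv, ← mul_assoc, mul_inv_cancel₀ (pow_ne_zero _ hq0), one_mul]
    rw [lhs, rhs, smul_smul, hscal]
  · -- b * star b
    have hP' := hP l
    calc b * star b
        = ζ₀ ^ l * (ζ₁ * (((ξ ^ s : Aˣ) : A) * (((ξ ^ (-s) : Aˣ) : A) *
            (ζ₁ * ((ξ : A) * (star ζ₀) ^ l))))) := by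
          rw [hsb, hb]; simp only [mul_assoc]
      _ = ζ₀ ^ l * (ζ₁ * (ζ₁ * ((ξ : A) * (star ζ₀) ^ l))) := by
          rw [← mul_assoc ((ξ ^ s : Aˣ) : A), ← Units.val_mul, ← zpow_add, add_neg_cancel,
            zpow_zero, Units.val_one, one_mul]
      _ = ζ₀ ^ l * (a * (star ζ₀) ^ l) := by
          rw [ha, pow_two]
          simp only [mul_assoc]
      _ = ζ₀ ^ l * ((q ^ 2) ^ l • ((star ζ₀) ^ l * a)) := by
          rw [aux_comm_pow a (star ζ₀) (q ^ 2) haw l]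
      _ = (q ^ 2) ^ l • (ζ₀ ^ l * (star ζ₀) ^ l * a) := by
          rw [mul_smul_comm, mul_assoc]
      _ = q ^ (2 * l) •
          (a * ((List.range l).map (fun m => (1 : A) - q ^ (2 * m) • a)).prod) := by
          rw [hP', ← aux_a_prod, pow_mul]
  · -- star b * b
    have hdo : ∀ (g : ℤ → A) (L : List ℕ), List.map g ((L : List ℕ) : List ℤ)
        = List.map (fun n : ℕ => g n) L := by
      intro g L
      induction L with
      | nil => rfl
      | cons x xs ih => simp_all [List.flatMap_cons]
    rw [hdo]
    have hQ' := hQ l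
    have hζQ : ζ₁ * ((List.range l).map
          (fun m : ℕ => (1 : A) - q ^ (-(2 * ((m : ℤ) + 1))) • a)).prod
        = ((List.range l).map
          (fun m : ℕ => (1 : A) - q ^ (-(2 * ((m : ℤ) + 1))) • a)).prod * ζ₁ := by
      have h := aux_z_prod a ζ₁ 1 (by rw [hζa, one_smul])
        (fun m : ℕ => q ^ (-(2 * ((m : ℤ) + 1)))) l
      simp only [one_mul] at h
      exact h
    calc star b * b
        = ((ξ ^ (-s) : Aˣ) : A) * ((ζ₁ * ((ξ : A) * ((star ζ₀) ^ l * (ζ₀ ^ l * ζ₁)))) *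
            ((ξ ^ s : Aˣ) : A)) := by
          rw [hsb, hb]; simp only [mul_assoc]
      _ = (ζ₁ * ((ξ : A) * ((star ζ₀) ^ l * (ζ₀ ^ l * ζ₁)))) *
            (((ξ ^ s : Aˣ) : A) * ((ξ ^ (-s) : Aˣ) : A)) := by
          rw [hcz (-s)]; simp only [mul_assoc]
      _ = ζ₁ * ((ξ : A) * ((star ζ₀) ^ l * (ζ₀ ^ l * ζ₁))) := by
          rw [← Units.val_mul, ← zpow_add, add_neg_cancel, zpow_zero, Units.val_one, mul_one]
      _ = ζ₁ * (((List.range l).map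
            (fun m : ℕ => (1 : A) - q ^ (-(2 * ((m : ℤ) + 1))) • a)).prod * ζ₁ * (ξ : A)) := by
          rw [← mul_assoc ((star ζ₀) ^ l), hQ', hcentral]
      _ = ((List.range l).map
            (fun m : ℕ => (1 : A) - q ^ (-(2 * ((m : ℤ) + 1))) • a)).prod *
            (ζ₁ * (ζ₁ * (ξ : A))) := by
          rw [← mul_assoc, ← mul_assoc, hζQ]
          simp only [mul_assoc]
      _ = a * ((List.range l).map
            (fun m : ℕ => (1 : A) - q ^ (-(2 * ((m : ℤ) + 1))) • a)).prod := by
          rw [← mul_assoc ζ₁ ζ₁, ← pow_two, ← ha,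
            ← aux_a_prod a (fun m : ℕ => q ^ (-(2 * ((m : ℤ) + 1)))) l]
end

section
/- In O(Σ³_q) with a = ζ₁²ξ, b = ζ₀^l ζ₁ ξ^s, c₋ = ζ₀^{2l} ξ^{2s−1}: a b = q^{−2l} b a, a c₋ = q^{−4l} c₋ a, b c₋ = q^{−2l} c₋ b, c₋ c₋* = ∏_{m=0}^{2l−1}(1 − q^{2m}a), and c₋* c₋ = ∏_{m=1}^{2l}(1 − q^{−2m}a). -/
/-- Further relations of `O(ℝP_q²(l;−))`: `a b = q^{−2l} b a`, `a c₋ = q^{−4l} c₋ a`,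
`b c₋ = q^{−2l} c₋ b`, `c₋ c₋* = ∏_{m=0}^{2l−1}(1 − q^{2m}a)`,
`c₋* c₋ = ∏_{m=1}^{2l}(1 − q^{−2m}a)`. -/
theorem RPq_minus_relations_c {A : Type*} [Ring A] [Algebra ℝ A] [StarRing A]
    (q : ℝ) (hq : q ∈ Set.Ioo (0 : ℝ) 1)
    (ζ₀ ζ₁ : A) (ξ : Aˣ)
    (hcentral : ∀ x : A, (ξ : A) * x = x * (ξ : A))
    (hunitary : star (ξ : A) = ((ξ⁻¹ : Aˣ) : A))
    (hrel1 : ζ₀ * ζ₁ = q • (ζ₁ * ζ₀))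
    (hrel2 : ζ₀ * star ζ₀ = star ζ₀ * ζ₀ + (q ^ (-2 : ℤ) - 1) • (ζ₁ ^ 2 * (ξ : A)))
    (hrel3 : ζ₀ * star ζ₀ + ζ₁ ^ 2 * (ξ : A) = 1)
    (hrel4 : star ζ₁ = ζ₁ * (ξ : A))
    (l : ℕ) (hl : 1 ≤ l) (s : ℤ)
    (a b c : A)
    (ha : a = ζ₁ ^ 2 * (ξ : A))
    (hb : b = ζ₀ ^ l * ζ₁ * ((ξ ^ s : Aˣ) : A))
    (hc : c = ζ₀ ^ (2 * l) * ((ξ ^ (2 * s - 1) : Aˣ) : A)) :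
    a * b = q ^ (-(2 * (l : ℤ))) • (b * a) ∧
    a * c = q ^ (-(4 * (l : ℤ))) • (c * a) ∧
    b * c = q ^ (-(2 * (l : ℤ))) • (c * b) ∧
    c * star c = ((List.range (2 * l)).map (fun m => (1 : A) - q ^ (2 * m) • a)).prod ∧
    star c * c =
      ((List.range (2 * l)).map
        (fun m => (1 : A) - q ^ (-(2 * ((m : ℤ) + 1))) • a)).prod := by
  obtain ⟨hq0, hq1⟩ := hq
  have hqne : q ≠ 0 := ne_of_gt hq0
  -- ξ powers are central
  have hXc : ∀ (k : ℤ) (x : A), ((ξ ^ k : Aˣ) : A) * x = x * ((ξ ^ k : Aˣ) : A) := by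
    intro k x
    exact (Commute.units_zpow_left (hcentral x) k)
  have hstar_inv : star ((ξ⁻¹ : Aˣ) : A) = (ξ : A) := by
    rw [← hunitary, star_star]
  have hstarX : ∀ k : ℤ, star ((ξ ^ k : Aˣ) : A) = ((ξ ^ (-k) : Aˣ) : A) := by
    intro k
    obtain ⟨n, rfl | rfl⟩ := k.eq_nat_or_neg
    · rw [zpow_natCast, Units.val_pow_eq_pow_val, star_pow, hunitary,
        ← Units.val_pow_eq_pow_val, inv_pow, ← zpow_natCast ξ n, ← zpow_neg]
    · rw [neg_neg, zpow_neg, zpow_natCast, ← inv_pow, Units.val_pow_eq_pow_val,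
        star_pow, hstar_inv, ← Units.val_pow_eq_pow_val, ← zpow_natCast ξ n]
  have hXX : ∀ k : ℤ, ((ξ ^ k : Aˣ) : A) * star ((ξ ^ k : Aˣ) : A) = 1 := by
    intro k
    rw [hstarX, ← Units.val_mul, ← zpow_add, add_neg_cancel, zpow_zero, Units.val_one]
  have hXX' : ∀ k : ℤ, star ((ξ ^ k : Aˣ) : A) * ((ξ ^ k : Aˣ) : A) = 1 := by
    intro k
    rw [hstarX, ← Units.val_mul, ← zpow_add, neg_add_cancel, zpow_zero, Units.val_one]
  have haζ₁ : a * ζ₁ = ζ₁ * a := by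
    rw [ha, mul_assoc, hcentral ζ₁]
    simp [sq, mul_assoc]
  have key : ζ₀ * (ζ₁ * ζ₁) = (q * q) • (ζ₁ * ζ₁ * ζ₀) := by
    rw [← mul_assoc, hrel1, smul_mul_assoc, mul_assoc, hrel1, mul_smul_comm, smul_smul,
      ← mul_assoc]
  have hza : ζ₀ * a = (q ^ 2 : ℝ) • (a * ζ₀) := by
    rw [ha, sq, ← mul_assoc, key, smul_mul_assoc, mul_assoc (ζ₁ * ζ₁), ← hcentral ζ₀,
      ← mul_assoc, sq q]
  have hzna : ∀ n : ℕ, ζ₀ ^ n * a = (q ^ (2 * n) : ℝ) • (a * ζ₀ ^ n) := by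
    intro n
    induction n with
    | zero => simp
    | succ n ih =>
      rw [pow_succ, mul_assoc, hza, mul_smul_comm, ← mul_assoc, ih]
      rw [smul_mul_assoc, smul_smul, mul_assoc,
        show q ^ 2 * q ^ (2 * n) = q ^ (2 * (n + 1)) by ring]
  have hznζ₁ : ∀ n : ℕ, ζ₀ ^ n * ζ₁ = (q ^ n : ℝ) • (ζ₁ * ζ₀ ^ n) := by
    intro n
    induction n with
    | zero => simp
    | succ n ih =>
      rw [pow_succ, mul_assoc, hrel1, mul_smul_comm, ← mul_assoc, ih]
      rw [smul_mul_assoc, smul_smul, mul_assoc,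
        show q * q ^ n = q ^ (n + 1) by ring]
  have hazn : ∀ n : ℕ, a * ζ₀ ^ n = ((q ^ (2 * n))⁻¹ : ℝ) • (ζ₀ ^ n * a) := by
    intro n
    rw [hzna n, smul_smul, inv_mul_cancel₀ (by positivity), one_smul]
  have h1ma : ζ₀ * star ζ₀ = 1 - a := by
    rw [ha, eq_sub_iff_add_eq, hrel3]
  have hq2 : q ^ (-2 : ℤ) = ((q ^ 2)⁻¹ : ℝ) := by
    rw [show (-2:ℤ) = -((2:ℕ):ℤ) by norm_num, zpow_neg, zpow_natCast]
  have h2 : star ζ₀ * ζ₀ = 1 - ((q ^ 2)⁻¹ : ℝ) • a := by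
    have h := hrel2
    rw [← ha, h1ma, hq2] at h
    have h' : star ζ₀ * ζ₀ = (1 - a) - ((q ^ 2)⁻¹ - 1) • a := by
      rw [h]; abel
    rw [h', sub_smul, one_smul]
    abel
  -- a commutes with the partial products
  have haP : ∀ n : ℕ, a * ((List.range n).map (fun m => (1 : A) - q ^ (2 * m) • a)).prod
      = ((List.range n).map (fun m => (1 : A) - q ^ (2 * m) • a)).prod * a := by
    intro n
    induction n with
    | zero => simp
    | succ n ih =>
      have hd : ((List.range (n+1)).map (fun m => (1 : A) - q ^ (2 * m) • a)).prod
          = ((List.range n).map (fun m => (1 : A) - q ^ (2 * m) • a)).prod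
            * ((1:A) - q ^ (2 * n) • a) := by
        rw [List.range_succ]; simp
      rw [hd, ← mul_assoc, ih, mul_assoc, mul_assoc]
      congr 1
      simp [mul_sub, sub_mul, mul_smul_comm, smul_mul_assoc]
  have hPn : ∀ n : ℕ, ζ₀ ^ n * (star ζ₀) ^ n =
      ((List.range n).map (fun m => (1 : A) - q ^ (2 * m) • a)).prod := by
    intro n
    induction n with
    | zero => simp
    | succ n ih =>
      have step : ζ₀ ^ (n+1) * (star ζ₀) ^ (n+1)
          = ζ₀ ^ n * (star ζ₀) ^ n - q ^ (2 * n) • (a * (ζ₀ ^ n * (star ζ₀) ^ n)) := by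
        rw [pow_succ ζ₀, pow_succ' (star ζ₀), mul_assoc, ← mul_assoc ζ₀, h1ma,
          sub_mul, one_mul, mul_sub, ← mul_assoc (ζ₀ ^ n) a, hzna n, smul_mul_assoc,
          mul_assoc a]
      have hd : ((List.range (n+1)).map (fun m => (1 : A) - q ^ (2 * m) • a)).prod
          = ((List.range n).map (fun m => (1 : A) - q ^ (2 * m) • a)).prod
            * ((1:A) - q ^ (2 * n) • a) := by
        rw [List.range_succ]; simp
      rw [step, ih, haP n, hd, mul_sub, mul_one, mul_smul_comm]
  have hsc : ∀ n : ℕ, q ^ (-(2 * ((n:ℤ) + 1))) = ((q ^ 2)⁻¹ : ℝ) * (q ^ (2 * n))⁻¹ := by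
    intro n
    rw [show -(2 * ((n:ℤ) + 1)) = -((2:ℕ):ℤ) + -(((2 * n : ℕ)):ℤ) by push_cast; ring,
      zpow_add₀ hqne, zpow_neg, zpow_neg, zpow_natCast, zpow_natCast]
  have hQn : ∀ n : ℕ, (star ζ₀) ^ n * ζ₀ ^ n =
      ((List.range n).map (fun m => (1 : A) - q ^ (-(2 * ((m:ℤ) + 1))) • a)).prod := by
    intro n
    induction n with
    | zero => simp
    | succ n ih =>
      have step : (star ζ₀) ^ (n+1) * ζ₀ ^ (n+1)
          = (star ζ₀) ^ n * ζ₀ ^ n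
            - (((q ^ 2)⁻¹ : ℝ) * (q ^ (2 * n))⁻¹) • ((star ζ₀) ^ n * ζ₀ ^ n * a) := by
        rw [pow_succ (star ζ₀), pow_succ' ζ₀, mul_assoc, ← mul_assoc (star ζ₀), h2,
          sub_mul, one_mul, smul_mul_assoc, hazn n, mul_sub, mul_smul_comm, mul_smul_comm,
          smul_smul, ← mul_assoc (star ζ₀ ^ n) (ζ₀ ^ n) a]
      have hd : ((List.range (n+1)).map (fun m => (1 : A) - q ^ (-(2 * ((m:ℤ) + 1))) • a)).prod
          = ((List.range n).map (fun m => (1 : A) - q ^ (-(2 * ((m:ℤ) + 1))) • a)).prod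
            * ((1:A) - q ^ (-(2 * ((n:ℤ) + 1))) • a) := by
        rw [List.range_succ]; simp
      rw [step, ih, hd, mul_sub, mul_one, mul_smul_comm, hsc n]
  refine ⟨?_, ?_, ?_, ?_, ?_⟩
  · -- a * b
    have hql : q ^ (-(2 * (l:ℤ))) = ((q ^ (2*l))⁻¹ : ℝ) := by
      rw [show -(2*(l:ℤ)) = -(((2*l : ℕ)):ℤ) by push_cast; ring, zpow_neg, zpow_natCast]
    have hba : b * a = (q ^ (2*l) : ℝ) • (a * b) := by
      rw [hb, mul_assoc (ζ₀ ^ l * ζ₁), hXc s a, ← mul_assoc, mul_assoc (ζ₀ ^ l),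
        ← haζ₁, ← mul_assoc, hzna l]
      simp only [smul_mul_assoc, mul_assoc]
    rw [hql, hba, smul_smul, inv_mul_cancel₀ (by positivity), one_smul]
  · -- a * c
    have hql4 : q ^ (-(4 * (l:ℤ))) = ((q ^ (2*(2*l)))⁻¹ : ℝ) := by
      rw [show -(4*(l:ℤ)) = -(((2*(2*l) : ℕ)):ℤ) by push_cast; ring, zpow_neg, zpow_natCast]
    have hca : c * a = (q ^ (2*(2*l)) : ℝ) • (a * c) := by
      rw [hc, mul_assoc, hXc (2*s-1) a, ← mul_assoc, hzna (2*l)]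
      simp only [smul_mul_assoc, mul_assoc]
    rw [hql4, hca, smul_smul, inv_mul_cancel₀ (by positivity), one_smul]
  · -- b * c
    have hql : q ^ (-(2 * (l:ℤ))) = ((q ^ (2*l))⁻¹ : ℝ) := by
      rw [show -(2*(l:ℤ)) = -(((2*l : ℕ)):ℤ) by push_cast; ring, zpow_neg, zpow_natCast]
    have e1 : c * b = ζ₀ ^ (3*l) * (ζ₁ * ((ξ ^ (3*s-1) : Aˣ) : A)) := by
      rw [hc, hb, mul_assoc (ζ₀ ^ (2*l)), hXc (2*s-1) (ζ₀ ^ l * ζ₁ * ((ξ ^ s : Aˣ) : A))]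
      simp only [mul_assoc]
      rw [← Units.val_mul, ← zpow_add, show s + (2*s-1) = 3*s-1 by ring,
        ← mul_assoc, ← pow_add, show 2*l + l = 3*l by ring]
    have hflip1 : ζ₁ * ζ₀ ^ (2*l) = ((q ^ (2*l))⁻¹ : ℝ) • (ζ₀ ^ (2*l) * ζ₁) := by
      rw [hznζ₁ (2*l), smul_smul, inv_mul_cancel₀ (by positivity), one_smul]
    have e2 : b * c = ((q ^ (2*l))⁻¹ : ℝ) • (ζ₀ ^ (3*l) * (ζ₁ * ((ξ ^ (3*s-1) : Aˣ) : A))) := by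
      rw [hb, hc]
      simp only [mul_assoc]
      rw [hXc s (ζ₀ ^ (2*l) * ((ξ ^ (2*s-1) : Aˣ) : A))]
      simp only [mul_assoc]
      rw [← Units.val_mul, ← zpow_add, show 2*s-1 + s = 3*s-1 by ring,
        ← mul_assoc ζ₁, hflip1, smul_mul_assoc, mul_smul_comm]
      rw [← mul_assoc, ← mul_assoc, ← pow_add, show l + 2*l = 3*l by ring, mul_assoc]
    rw [hql, e1, e2]
  · -- c * star c
    rw [hc, star_mul, star_pow, hstarX (2*s-1), mul_assoc,
      ← mul_assoc ((ξ ^ (2*s-1) : Aˣ) : A), ← Units.val_mul, ← zpow_add, add_neg_cancel,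
      zpow_zero, Units.val_one, one_mul, hPn (2*l)]
  · -- star c * c
    rw [hc, star_mul, star_pow, hstarX (2*s-1), mul_assoc,
      ← mul_assoc (star ζ₀ ^ (2*l)), hQn (2*l),
      hXc (-(2*s-1)) (((List.range (2*l)).map
        (fun m => (1 : A) - q ^ (-(2 * ((m:ℤ) + 1))) • a)).prod * ((ξ ^ (2*s-1) : Aˣ) : A)),
      mul_assoc, ← Units.val_mul, ← zpow_add, add_neg_cancel, zpow_zero, Units.val_one,
      mul_one]
end

section
/- Let H = ℓ²(ℕ) with orthonormal basis (eₙ) and define operators on H by A(eₙ) = q^{2(ln+r)} eₙ and C(eₙ) = ∏_{m=1}^{l}(1 − q^{2(ln+r−m)})^{1/2} e_{n−1} (with C(e₀) = 0), where q ∈ (0,1), l ≥ 1, 1 ≤ r ≤ l. Then A* = A, A C = q^{−2l} C A, C C* = ∏_{m=0}^{l−1}(1 − q^{2m}A), and C* C = ∏_{m=1}^{l}(1 − q^{−2m}A). -/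
noncomputable section

abbrev H : Type := lp (fun _ : ℕ => ℂ) 2

/-- The standard orthonormal basis vector `eₙ` of `ℓ²(ℕ)`. -/
def e (n : ℕ) : H := lp.single 2 n 1

lemma inner_e (x : H) (n : ℕ) : @inner ℂ _ _ (e n) x = x n := by
  simp [e, lp.inner_single_left]

lemma inner_e_e (n m : ℕ) : @inner ℂ _ _ (e n) (e m) = if m = n then 1 else 0 := by
  rw [inner_e]; simp [e, lp.single_apply, eq_comm, Pi.single_apply]

lemma dense_span_e : Dense (Submodule.span ℂ (Set.range e) : Set H) := by
  intro f
  have hs : HasSum (fun i : ℕ => lp.single 2 i (f i) : ℕ → H) f :=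
    lp.hasSum_single ENNReal.ofNat_ne_top f
  refine mem_closure_of_tendsto hs (Filter.Eventually.of_forall fun s => ?_)
  refine Submodule.sum_mem _ fun i _ => ?_
  have : (lp.single 2 i (f i) : H) = f i • e i := by
    rw [e, ← lp.single_smul]; norm_num
  rw [this]
  exact Submodule.smul_mem _ _ (Submodule.subset_span ⟨i, rfl⟩)

lemma ext_e {T S : H →L[ℂ] H} (h : ∀ n, T (e n) = S (e n)) : T = S := by
  refine ContinuousLinearMap.ext_on dense_span_e ?_
  rintro x ⟨n, rfl⟩; exact h n

lemma eq_zero_of_inner_e {x : H} (h : ∀ n, @inner ℂ _ _ (e n) x = 0) : x = 0 := by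
  ext n
  have := h n
  rw [inner_e] at this
  simpa using this

lemma eq_of_inner_e {x y : H} (h : ∀ n, @inner ℂ _ _ (e n) x = @inner ℂ _ _ (e n) y) :
    x = y := by
  have : x - y = 0 := by
    refine eq_zero_of_inner_e fun n => ?_
    rw [inner_sub_right, h n, sub_self]
  exact sub_eq_zero.mp this

lemma list_diag_prod {α : Type*} (A : H →L[ℂ] H) (f : α → ℂ) (L : List α) (n : ℕ) (a : ℂ)
    (hA : A (e n) = a • e n) :
    ((L.map fun m => (1 : H →L[ℂ] H) - f m • A).prod) (e n)
      = ((L.map fun m => 1 - f m * a).prod) • e n := by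
  induction L with
  | nil => simp
  | cons t L ih =>
    simp only [List.map_cons, List.prod_cons, ContinuousLinearMap.mul_apply, ih, map_smul,
      ContinuousLinearMap.sub_apply, ContinuousLinearMap.smul_apply,
      ContinuousLinearMap.one_apply, hA, smul_smul]
    have h1 : e n - (f t * a) • e n = (1 - f t * a) • e n := by rw [sub_smul, one_smul]
    rw [h1, smul_smul, mul_comm]

/-- The operators `A(eₙ) = q^{2(ln+r)} eₙ` and
`C(eₙ) = ∏_{m=1}^{l}(1 − q^{2(ln+r−m)})^{1/2} e_{n−1}` (`C(e₀) = 0`) satisfy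
`A* = A`, `A C = q^{−2l} C A`, `C C* = ∏_{m=0}^{l−1}(1 − q^{2m}A)` and
`C* C = ∏_{m=1}^{l}(1 − q^{−2m}A)`. -/
theorem rep_plus_relations (q : ℝ) (hq : q ∈ Set.Ioo (0 : ℝ) 1)
    (l r : ℕ) (hl : 1 ≤ l) (hr1 : 1 ≤ r) (hrl : r ≤ l)
    (A C : H →L[ℂ] H)
    (hA : ∀ n : ℕ, A (e n) = ((q ^ (2 * (l * n + r)) : ℝ) : ℂ) • e n)
    (hC0 : C (e 0) = 0)
    (hC : ∀ n : ℕ, C (e (n + 1)) =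
      ((∏ m ∈ Finset.range l,
          Real.sqrt (1 - q ^ (2 * ((l * (n + 1) + r : ℤ) - ((m : ℤ) + 1)))) : ℝ) : ℂ) • e n) :
    ContinuousLinearMap.adjoint A = A ∧
    A * C = ((q : ℂ) ^ (-(2 * (l : ℤ)))) • (C * A) ∧
    C * ContinuousLinearMap.adjoint C =
      ((List.range l).map (fun m => (1 : H →L[ℂ] H) - ((q : ℂ) ^ (2 * m)) • A)).prod ∧
    ContinuousLinearMap.adjoint C * C =
      ((List.range l).map
        (fun m => (1 : H →L[ℂ] H) - ((q : ℂ) ^ (-(2 * ((m : ℤ) + 1)))) • A)).prod := by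
  obtain ⟨hq0, hq1⟩ := hq
  have hqC : (q : ℂ) ≠ 0 := by exact_mod_cast hq0.ne'
  set c : ℕ → ℝ := fun n => ∏ m ∈ Finset.range l,
      Real.sqrt (1 - q ^ (2 * ((l * (n + 1) + r : ℤ) - ((m : ℤ) + 1)))) with hc
  have hCc : ∀ n : ℕ, C (e (n + 1)) = ((c n : ℝ) : ℂ) • e n := by
    intro n; simp only [hc]; exact hC n
  have hmN : ∀ (n m : ℕ), m < l → m + 1 ≤ l * (n + 1) + r := by
    intro n m hm; nlinarith
  -- zpow factors equal nat-pow factors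
  have hx : ∀ (n : ℕ), ∀ m ∈ Finset.range l,
      (1 - q ^ (2 * ((l * (n + 1) + r : ℤ) - ((m : ℤ) + 1))))
        = 1 - q ^ (2 * (l * (n + 1) + r - (m + 1))) := by
    intro n m hm
    rw [Finset.mem_range] at hm
    have h1 := hmN n m hm
    congr 1
    rw [show (2 * ((l * (n + 1) + r : ℤ) - ((m : ℤ) + 1)))
        = ((2 * (l * (n + 1) + r - (m + 1)) : ℕ) : ℤ) by
      push_cast [Nat.cast_sub h1]; ring]
    rw [zpow_natCast]
  have c_sq : ∀ n : ℕ, c n * c n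
      = ∏ m ∈ Finset.range l, (1 - q ^ (2 * (l * (n + 1) + r - (m + 1)))) := by
    intro n
    have h1 : c n = ∏ m ∈ Finset.range l,
        Real.sqrt (1 - q ^ (2 * (l * (n + 1) + r - (m + 1)))) :=
      Finset.prod_congr rfl fun m hm => by rw [hx n m hm]
    rw [h1, ← Finset.prod_mul_distrib]
    exact Finset.prod_congr rfl fun m hm =>
      Real.mul_self_sqrt (sub_nonneg.mpr (pow_le_one₀ hq0.le hq1.le))
  -- adjoint of A
  have hAdj : ContinuousLinearMap.adjoint A = A := by
    refine ext_e fun n => eq_of_inner_e fun k => ?_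
    rw [ContinuousLinearMap.adjoint_inner_right, hA n, hA k, inner_smul_left,
      inner_smul_right, inner_e_e, Complex.conj_ofReal]
    by_cases h : n = k
    · subst h; rfl
    · simp [h]
  -- adjoint of C on basis vectors
  have hCadj : ∀ n : ℕ, ContinuousLinearMap.adjoint C (e n) = ((c n : ℝ) : ℂ) • e (n + 1) := by
    intro n
    refine eq_of_inner_e fun k => ?_
    rw [ContinuousLinearMap.adjoint_inner_right]
    cases k with
    | zero => rw [hC0, inner_zero_left, inner_smul_right, inner_e_e]; simp
    | succ j =>
      rw [hCc j, inner_smul_left, inner_smul_right, inner_e_e, inner_e_e, Complex.conj_ofReal]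
      by_cases h : n = j
      · subst h; simp
      · have h3 : ¬ (n + 1 = j + 1) := by omega
        simp [h, h3]
  -- the coerced list appearing in the statement
  have hLrw : ((List.range l).map
        (fun m => (1 : H →L[ℂ] H) - ((q : ℂ) ^ (-(2 * ((m : ℤ) + 1)))) • A))
      = (List.range l).map
        (fun m : ℕ => (1 : H →L[ℂ] H) - ((q : ℂ) ^ (-(2 * ((m : ℤ) + 1)))) • A) := by
    rw [show (do let a ← List.range l; pure ((a : ℕ) : ℤ) : List ℤ)
        = (List.range l).map (fun a : ℕ => (a : ℤ)) from List.flatMap_pure_eq_map _ _,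
      List.map_map]
    rfl
  refine ⟨hAdj, ?_, ?_, ?_⟩
  · -- A C = q^{-2l} C A
    refine ext_e fun n => ?_
    cases n with
    | zero =>
      simp only [ContinuousLinearMap.mul_apply, ContinuousLinearMap.smul_apply, hC0,
        map_zero, hA 0, map_smul, hC0, smul_zero]
    | succ n =>
      simp only [ContinuousLinearMap.mul_apply, ContinuousLinearMap.smul_apply]
      rw [hCc n, hA (n + 1), map_smul, map_smul, hA n, hCc n, smul_smul, smul_smul, smul_smul]
      congr 1
      have ha_rec : ((q ^ (2 * (l * (n + 1) + r)) : ℝ) : ℂ)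
          = (q : ℂ) ^ (2 * l) * ((q ^ (2 * (l * n + r)) : ℝ) : ℂ) := by
        push_cast
        rw [← pow_add]
        congr 1
        ring
      have hinv : (q : ℂ) ^ (-(2 * (l : ℤ))) * (q : ℂ) ^ (2 * l) = 1 := by
        rw [← zpow_natCast (q : ℂ) (2 * l), ← zpow_add₀ hqC,
          show -(2 * (l : ℤ)) + ((2 * l : ℕ) : ℤ) = 0 by push_cast; ring, zpow_zero]
      rw [ha_rec]
      linear_combination (-(((q ^ (2 * (l * n + r)) : ℝ) : ℂ) * ((c n : ℝ) : ℂ))) * hinv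
  · -- C C* = ∏ (1 - q^{2m} A)
    refine ext_e fun n => ?_
    rw [ContinuousLinearMap.mul_apply, hCadj n, map_smul, hCc n, smul_smul,
      list_diag_prod A (fun m => (q : ℂ) ^ (2 * m)) (List.range l) n _ (hA n)]
    congr 1
    have hreal : c n * c n = ∏ m ∈ Finset.range l, (1 - q ^ (2 * m) * q ^ (2 * (l * n + r))) := by
      rw [c_sq n]
      conv_rhs => rw [← Finset.prod_range_reflect]
      refine Finset.prod_congr rfl fun m hm => ?_
      rw [Finset.mem_range] at hm
      rw [← pow_add]
      congr 1
      set P := l * n with hP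
      set Q := l * (n + 1) with hQ
      have e1 : Q = P + l := by rw [hP, hQ]; ring
      clear_value P Q
      clear hP hQ
      congr 1
      omega
    have hlist : ((List.range l).map fun m => 1 - (q : ℂ) ^ (2 * m)
          * ((q ^ (2 * (l * n + r)) : ℝ) : ℂ)).prod
        = ∏ m ∈ Finset.range l, (1 - (q : ℂ) ^ (2 * m) * ((q ^ (2 * (l * n + r)) : ℝ) : ℂ)) := rfl
    rw [hlist]
    exact_mod_cast congrArg Complex.ofReal hreal
  · -- C* C = ∏ (1 - q^{-2(m+1)} A)
    rw [hLrw]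
    refine ext_e fun n => ?_
    cases n with
    | zero =>
      rw [ContinuousLinearMap.mul_apply, hC0, map_zero,
        list_diag_prod A (fun m : ℕ => (q : ℂ) ^ (-(2 * ((m : ℤ) + 1)))) (List.range l) 0 _
          (hA 0)]
      have hlist : ((List.range l).map fun m : ℕ => 1 - (q : ℂ) ^ (-(2 * ((m : ℤ) + 1)))
            * ((q ^ (2 * (l * 0 + r)) : ℝ) : ℂ)).prod
          = ∏ m ∈ Finset.range l, (1 - (q : ℂ) ^ (-(2 * ((m : ℤ) + 1)))
            * ((q ^ (2 * (l * 0 + r)) : ℝ) : ℂ)) := rfl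
      have hfac0 : (1 - (q : ℂ) ^ (-(2 * (((r - 1 : ℕ) : ℤ) + 1)))
          * ((q ^ (2 * (l * 0 + r)) : ℝ) : ℂ)) = 0 := by
        have hcast : ((q ^ (2 * (l * 0 + r)) : ℝ) : ℂ) = (q : ℂ) ^ (2 * r) := by
          push_cast
          norm_num
        rw [hcast, ← zpow_natCast (q : ℂ) (2 * r), ← zpow_add₀ hqC,
          show (-(2 * (((r - 1 : ℕ) : ℤ) + 1)) + ((2 * r : ℕ) : ℤ)) = 0 by omega, zpow_zero]
        ring
      rw [hlist, Finset.prod_eq_zero (Finset.mem_range.mpr (show r - 1 < l by omega)) hfac0,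
        zero_smul]
    | succ n =>
      rw [ContinuousLinearMap.mul_apply, hCc n, map_smul, hCadj n, smul_smul,
        list_diag_prod A (fun m : ℕ => (q : ℂ) ^ (-(2 * ((m : ℤ) + 1)))) (List.range l) (n + 1) _
          (hA (n + 1))]
      congr 1
      have hlist : ((List.range l).map fun m : ℕ => 1 - (q : ℂ) ^ (-(2 * ((m : ℤ) + 1)))
            * ((q ^ (2 * (l * (n + 1) + r)) : ℝ) : ℂ)).prod
          = ∏ m ∈ Finset.range l, (1 - (q : ℂ) ^ (-(2 * ((m : ℤ) + 1)))
            * ((q ^ (2 * (l * (n + 1) + r)) : ℝ) : ℂ)) := rfl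
      rw [hlist]
      have hfac : ∀ m ∈ Finset.range l,
          (1 - (q : ℂ) ^ (-(2 * ((m : ℤ) + 1))) * ((q ^ (2 * (l * (n + 1) + r)) : ℝ) : ℂ))
            = (((1 - q ^ (2 * (l * (n + 1) + r - (m + 1)))) : ℝ) : ℂ) := by
        intro m hm
        rw [Finset.mem_range] at hm
        have h1 := hmN n m hm
        have hcast : ((q ^ (2 * (l * (n + 1) + r)) : ℝ) : ℂ)
            = (q : ℂ) ^ ((2 * (l * (n + 1) + r) : ℕ) : ℤ) := by
          rw [zpow_natCast]
          push_cast
          ring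
        rw [hcast, ← zpow_add₀ hqC]
        have hexp : (-(2 * ((m : ℤ) + 1)) + ((2 * (l * (n + 1) + r) : ℕ) : ℤ))
            = ((2 * (l * (n + 1) + r - (m + 1)) : ℕ) : ℤ) := by
          push_cast [Nat.cast_sub h1]; ring
        rw [hexp, zpow_natCast]
        push_cast
        ring
      rw [Finset.prod_congr rfl hfac, ← Complex.ofReal_prod, ← c_sq n]
      push_cast
      ring

end
end

section
/- Let H = ℓ²(ℕ) with orthonormal basis (eₙ) and, for q ∈ (0,1), l ≥ 1, 1 ≤ r ≤ l, define A(eₙ) = q^{2(ln+r)} eₙ, B(eₙ) = q^{ln+r} ∏_{m=1}^{l}(1 − q^{2(ln+r−m)})^{1/2} e_{n−1} (B(e₀)=0), and C(eₙ) = ∏_{m=1}^{2l}(1 − q^{2(ln+r−m)})^{1/2} e_{n−2} (C(e₀)=C(e₁)=0). Then B² = q^{3l} A C and B C = q^{−2l} C B. -/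
noncomputable section

lemma cprod_shift (q : ℝ) (l : ℕ) (N M : ℤ) (h : N = M) :
    ∏ m ∈ Finset.range l, ((Real.sqrt (1 - q ^ (2 * (N - ((m : ℤ) + 1)))) : ℝ) : ℂ) =
    ∏ m ∈ Finset.range l, ((Real.sqrt (1 - q ^ (2 * (M - ((m : ℤ) + 1)))) : ℝ) : ℂ) := by
  rw [h]

lemma cprod_split (q : ℝ) (l : ℕ) (N : ℤ) :
    ∏ m ∈ Finset.range (2 * l), ((Real.sqrt (1 - q ^ (2 * (N - ((m : ℤ) + 1)))) : ℝ) : ℂ) =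
    (∏ m ∈ Finset.range l, ((Real.sqrt (1 - q ^ (2 * (N - ((m : ℤ) + 1)))) : ℝ) : ℂ)) *
    (∏ m ∈ Finset.range l,
      ((Real.sqrt (1 - q ^ (2 * ((N - l) - ((m : ℤ) + 1)))) : ℝ) : ℂ)) := by
  rw [two_mul, Finset.prod_range_add]
  congr 1
  refine Finset.prod_congr rfl fun m _ => ?_
  congr 3
  push_cast
  ring

/-- For the operators `A(eₙ) = q^{2(ln+r)} eₙ`,
`B(eₙ) = q^{ln+r} ∏_{m=1}^{l}(1 − q^{2(ln+r−m)})^{1/2} e_{n−1}` (`B(e₀)=0`) and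
`C(eₙ) = ∏_{m=1}^{2l}(1 − q^{2(ln+r−m)})^{1/2} e_{n−2}` (`C(e₀)=C(e₁)=0`) one has
`B² = q^{3l} A C` and `B C = q^{−2l} C B`. -/
theorem rep_minus_relations (q : ℝ) (hq : q ∈ Set.Ioo (0 : ℝ) 1)
    (l r : ℕ) (hl : 1 ≤ l) (hr1 : 1 ≤ r) (hrl : r ≤ l)
    (A B C : H →L[ℂ] H)
    (hA : ∀ n : ℕ, A (e n) = ((q ^ (2 * (l * n + r)) : ℝ) : ℂ) • e n)
    (hB0 : B (e 0) = 0)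
    (hB : ∀ n : ℕ, B (e (n + 1)) =
      ((q ^ (l * (n + 1) + r) *
          ∏ m ∈ Finset.range l,
            Real.sqrt (1 - q ^ (2 * ((l * (n + 1) + r : ℤ) - ((m : ℤ) + 1)))) : ℝ) : ℂ) • e n)
    (hC0 : C (e 0) = 0) (hC1 : C (e 1) = 0)
    (hC : ∀ n : ℕ, C (e (n + 2)) =
      ((∏ m ∈ Finset.range (2 * l),
          Real.sqrt (1 - q ^ (2 * ((l * (n + 2) + r : ℤ) - ((m : ℤ) + 1)))) : ℝ) : ℂ) • e n) :
    B * B = ((q : ℂ) ^ (3 * l)) • (A * C) ∧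
    B * C = ((q : ℂ) ^ (-(2 * (l : ℤ)))) • (C * B) := by
  obtain ⟨hq0, hq1⟩ := hq
  have hqne : (q : ℂ) ≠ 0 := by exact_mod_cast ne_of_gt hq0
  constructor
  · refine ext_e fun n => ?_
    match n with
    | 0 => simp [hB0, hC0]
    | 1 => simp [hB, hB0, hC1, smul_smul]
    | (n + 2) =>
      simp only [ContinuousLinearMap.mul_apply, ContinuousLinearMap.smul_apply,
        hB, hC, hA, map_smul, smul_smul]
      congr 1
      push_cast
      rw [cprod_split q l ((l : ℤ) * ((n : ℤ) + 2) + r)]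
      rw [cprod_shift q l ((l : ℤ) * ((n : ℤ) + 1 + 1) + r)
        ((l : ℤ) * ((n : ℤ) + 2) + r) (by ring)]
      rw [cprod_shift q l (((l : ℤ) * ((n : ℤ) + 2) + r) - l)
        ((l : ℤ) * ((n : ℤ) + 1) + r) (by ring)]
      ring
  · refine ext_e fun n => ?_
    match n with
    | 0 => simp [hB0, hC0]
    | 1 => simp [hB, hC0, hC1]
    | 2 => simp [hB, hC, hC1, hB0]
    | (k + 3) =>
      simp only [ContinuousLinearMap.mul_apply, ContinuousLinearMap.smul_apply,
        hB, hC, map_smul, smul_smul]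
      congr 1
      have hzp : ((q : ℂ) ^ (-(2 * (l : ℤ)))) = ((q : ℂ) ^ (2 * l))⁻¹ := by
        rw [zpow_neg]
        norm_cast
      rw [hzp]
      push_cast
      rw [cprod_split q l ((l : ℤ) * ((k : ℤ) + 1 + 2) + r)]
      rw [cprod_split q l ((l : ℤ) * ((k : ℤ) + 2) + r)]
      rw [cprod_shift q l (((l : ℤ) * ((k : ℤ) + 1 + 2) + r) - l)
        ((l : ℤ) * ((k : ℤ) + 2) + r) (by ring)]
      rw [cprod_shift q l (((l : ℤ) * ((k : ℤ) + 2) + r) - l)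
        ((l : ℤ) * ((k : ℤ) + 1) + r) (by ring)]
      rw [cprod_shift q l ((l : ℤ) * ((k : ℤ) + 2 + 1) + r)
        ((l : ℤ) * ((k : ℤ) + 1 + 2) + r) (by ring)]
      field_simp
      ring

end
end
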